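/- Let q ∈ (0,1) with q > 1/2, and let p ∈ Δ_2 with p_1 < p_2. Then G^n(p) converges to (0, 1, 0) as n → ∞. -/
import Mathlib


open Filter Topology

/-- The map G = (G₁,G₂,G₃) on ℝ³ (with parameter q):
G₁(x) = x₁² + 2q x₁ x₃, G₂(x) = x₂² + 2q x₂ x₃,
G₃(x) = x₃² + 2 x₁ x₂ + 2(1−q) x₁ x₃ + 2(1−q) x₂ x₃. -/
noncomputable def Gmap (q : ℝ) (x : ℝ × ℝ × ℝ) : ℝ × ℝ × ℝ :=
  (x.1 ^ 2 + 2 * q * x.1 * x.2.2,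
   x.2.1 ^ 2 + 2 * q * x.2.1 * x.2.2,
   x.2.2 ^ 2 + 2 * x.1 * x.2.1 + 2 * (1 - q) * x.1 * x.2.2
     + 2 * (1 - q) * x.2.1 * x.2.2)

/-- The open simplex Δ₂ ⊆ ℝ³. -/
def simplex2 : Set (ℝ × ℝ × ℝ) :=
  {p | p.1 + p.2.1 + p.2.2 = 1 ∧ 0 < p.1 ∧ 0 < p.2.1 ∧ 0 < p.2.2}

/-- If q > 1/2 and p₁ < p₂, then G^n(p) → (0,1,0). -/
theorem tendsto_second_state (q : ℝ) (hq0 : 0 < q) (hq1 : q < 1)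
    (hq : 1 / 2 < q) (p : ℝ × ℝ × ℝ) (hp : p ∈ simplex2) (h12 : p.1 < p.2.1) :
    Tendsto (fun n => (Gmap q)^[n] p) atTop (𝓝 ((0 : ℝ), (1 : ℝ), (0 : ℝ))) := by
  obtain ⟨x, hx⟩ : ∃ x : ℕ → ℝ × ℝ × ℝ, x = fun n => (Gmap q)^[n] p := ⟨_, rfl⟩
  have hstep : ∀ n, x (n + 1) = Gmap q (x n) := fun n => by
    rw [hx]; simp only [Function.iterate_succ_apply']
  have hx0 : x 0 = p := by rw [hx]; rfl
  -- invariance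
  have key : ∀ n, ((x n).1 + (x n).2.1 + (x n).2.2 = 1 ∧ 0 < (x n).1 ∧
      0 < (x n).2.1 ∧ 0 < (x n).2.2) ∧ (x n).1 < (x n).2.1 := by
    intro n; induction n with
    | zero => rw [hx0]; exact ⟨hp, h12⟩
    | succ n ih =>
      obtain ⟨⟨hs, h1, h2, h3⟩, hlt⟩ := ih
      rw [hstep n]
      simp only [Gmap]
      have hq' : (0:ℝ) < 1 - q := by linarith
      refine ⟨⟨?_, ?_, ?_, ?_⟩, ?_⟩
      · linear_combination ((x n).1 + (x n).2.1 + (x n).2.2 + 1) * hs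
      · nlinarith [mul_pos h1 h1, mul_pos (mul_pos hq0 h1) h3]
      · nlinarith [mul_pos h2 h2, mul_pos (mul_pos hq0 h2) h3]
      · nlinarith [mul_pos h3 h3, mul_pos h1 h2,
          mul_pos (mul_pos hq' h1) h3, mul_pos (mul_pos hq' h2) h3]
      · have hfac : (0:ℝ) < (x n).1 + (x n).2.1 + 2 * q * (x n).2.2 := by
          nlinarith [mul_pos hq0 h3]
        nlinarith [mul_pos (sub_pos.mpr hlt) hfac]
  -- scalar sequences
  obtain ⟨a, ha⟩ : ∃ a : ℕ → ℝ, ∀ n, a n = (x n).1 := ⟨_, fun _ => rfl⟩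
  obtain ⟨t, ht⟩ : ∃ t : ℕ → ℝ, ∀ n, t n = (x n).2.2 := ⟨_, fun _ => rfl⟩
  obtain ⟨d, hd⟩ : ∃ d : ℕ → ℝ, ∀ n, d n = (x n).2.1 - (x n).1 := ⟨_, fun _ => rfl⟩
  have hdpos : ∀ n, 0 < d n := fun n => by rw [hd n]; exact sub_pos.mpr (key n).2
  have htpos : ∀ n, 0 < t n := fun n => by rw [ht n]; exact (key n).1.2.2.2
  have hapos : ∀ n, 0 < a n := fun n => by rw [ha n]; exact (key n).1.2.1
  have hd0 : 0 < d 0 := hdpos 0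
  have hdrec : ∀ n, d (n + 1) = d n * (1 + (2 * q - 1) * t n) := by
    intro n
    have hs := (key n).1.1
    rw [hd (n+1), hd n, ht n, hstep n]
    simp only [Gmap]
    linear_combination ((x n).2.1 - (x n).1) * hs
  have hq' : (0:ℝ) < 2 * q - 1 := by linarith
  have hdmono : ∀ n, d n ≤ d (n + 1) := by
    intro n; rw [hdrec n]
    nlinarith [mul_pos (mul_pos hq' (hdpos n)) (htpos n)]
  have hd0le : ∀ n, d 0 ≤ d n := by
    intro n; induction n with
    | zero => exact le_refl _
    | succ n ih => exact le_trans ih (hdmono n)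
  have hdle1 : ∀ n, d n ≤ 1 := by
    intro n
    have h := (key n).1
    rw [hd n]; linarith [h.1, h.2.1, h.2.2.2]
  -- summability of t
  have hC : 0 < d 0 * (2 * q - 1) := mul_pos hd0 hq'
  have hsum_t : Summable t := by
    apply summable_of_sum_range_le (c := 1 / (d 0 * (2 * q - 1)))
      (fun n => (htpos n).le)
    intro N
    rw [le_div_iff₀ hC]
    have htel : ∀ N, d 0 * (2 * q - 1) * (∑ i ∈ Finset.range N, t i) ≤ d N - d 0 := by
      intro N; induction N with
      | zero => simp
      | succ N ih =>
        rw [Finset.sum_range_succ]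
        have hstep' : d 0 * (2 * q - 1) * t N ≤ d (N + 1) - d N := by
          rw [hdrec N]
          nlinarith [mul_nonneg (mul_nonneg (sub_nonneg.mpr (hd0le N)) hq'.le) (htpos N).le]
        nlinarith
    nlinarith [htel N, hdle1 N, hd0]
  have ht0 : Tendsto t atTop (𝓝 0) := hsum_t.tendsto_atTop_zero
  -- a tends to 0
  have haub : ∀ n, a n ≤ (1 - d 0) / 2 := by
    intro n
    have hs := (key n).1
    have h := hd0le n
    rw [hd n] at h
    rw [ha n]
    linarith [hs.1, hs.2.2.2]
  have harec : ∀ n, a (n + 1) = a n * (a n + 2 * q * t n) := by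
    intro n; rw [ha (n+1), ha n, ht n, hstep n]; simp only [Gmap]; ring
  obtain ⟨c, hcdef⟩ : ∃ c : ℝ, c = (1 - d 0) / 2 + d 0 / 4 := ⟨_, rfl⟩
  have hc1 : c < 1 := by rw [hcdef]; linarith
  have hc0 : 0 ≤ c := by
    have h1 := haub 0
    have h2 := hapos 0
    rw [hcdef]; linarith
  obtain ⟨N, hN⟩ : ∃ N, ∀ n ≥ N, t n ≤ d 0 / 8 := by
    have hev : ∀ᶠ n in atTop, t n ≤ d 0 / 8 :=
      ht0.eventually (eventually_le_nhds (by linarith))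
    exact eventually_atTop.mp hev
  have haN1 : a N ≤ 1 := by
    have := haub N; linarith
  have hgeo : ∀ k, a (N + k) ≤ a N * c ^ k := by
    intro k; induction k with
    | zero => simp
    | succ k ih =>
      have ht' := hN (N + k) (Nat.le_add_right N k)
      have hfac : a (N + k) + 2 * q * t (N + k) ≤ c := by
        rw [hcdef]
        have h1 := haub (N + k)
        have h3 := htpos (N + k)
        nlinarith
      have hstep2 : a (N + k + 1) ≤ a (N + k) * c := by
        rw [harec (N + k)]
        nlinarith [hapos (N + k)]
      calc a (N + (k + 1)) = a (N + k + 1) := by ring_nf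
        _ ≤ a (N + k) * c := hstep2
        _ ≤ (a N * c ^ k) * c := by nlinarith [hapos (N + k), pow_nonneg hc0 k]
        _ = a N * c ^ (k + 1) := by ring
  have ha0 : Tendsto a atTop (𝓝 0) := by
    have hck : Tendsto (fun k => a N * c ^ k) atTop (𝓝 0) := by
      have h := tendsto_pow_atTop_nhds_zero_of_lt_one hc0 hc1
      simpa using h.const_mul (a N)
    have hshift : Tendsto (fun k => a (N + k)) atTop (𝓝 0) :=
      squeeze_zero (fun k => (hapos (N + k)).le) hgeo hck
    have hshift' : Tendsto (fun k => a (k + N)) atTop (𝓝 0) := by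
      simpa [add_comm] using hshift
    exact (tendsto_add_atTop_iff_nat N).mp hshift'
  -- b tends to 1
  have hb1 : Tendsto (fun n => (x n).2.1) atTop (𝓝 1) := by
    have heq : (fun n => (x n).2.1) = fun n => 1 - a n - t n := by
      funext n
      have hs := (key n).1.1
      rw [ha n, ht n]; linarith
    rw [heq]
    have h10 : (1:ℝ) - 0 - 0 = 1 := by ring
    have := (tendsto_const_nhds (x := (1:ℝ)) (f := atTop)).sub ha0 |>.sub ht0
    rwa [h10] at this
  -- combine
  have hcomb : Tendsto (fun n => (a n, (x n).2.1, t n)) atTop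
      (𝓝 ((0:ℝ), (1:ℝ), (0:ℝ))) :=
    ha0.prodMk_nhds (hb1.prodMk_nhds ht0)
  rw [← hx]
  convert hcomb using 2 with n
  rw [ha n, ht n]
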